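/- arXiv:2301.08981 — 3 statements merged into one kernel-verified Lean document; each statement's English description precedes it below -/
import Mathlib

section
/- Assume there exists c ∈ ℕ^r with Ḡ(c) ⊆ O (a conductor). Then for every ℓ ∈ ℕ^r and every index i: h(ℓ+E_i) > h(ℓ) if and only if there exists s ∈ ℕ^r with s ≥ ℓ componentwise, s_i = ℓ_i, and there exists f ∈ O with ord_j f = s_j for every j. -/
/-- `Gbar r ℓ` is the subspace of `r`-tuples of power series whose `i`-th component has
order at least `ℓ i`, for every `i`. -/
noncomputable def Gbar (r : ℕ) (ℓ : Fin r → ℕ) : Submodule ℂ (Fin r → PowerSeries ℂ) where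
  carrier := {f | ∀ i : Fin r, (ℓ i : ℕ∞) ≤ (f i).order}
  zero_mem' := by
    intro i
    simp [PowerSeries.order_zero]
  add_mem' := by
    intro a b ha hb i
    refine le_trans (le_min (ha i) (hb i)) ?_
    simpa using PowerSeries.min_order_le_order_add (a i) (b i)
  smul_mem' := by
    intro c f hf i
    refine PowerSeries.le_order _ _ ?_
    intro n hn
    have hlt : (n : ℕ∞) < ((f : Fin r → PowerSeries ℂ) i).order := lt_of_lt_of_le hn (hf i)
    have : (PowerSeries.coeff n) ((c • f) i) = c • (PowerSeries.coeff n) (f i) := by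
      simp
    rw [this, PowerSeries.coeff_of_lt_order n hlt, smul_zero]

/-- `F O ℓ = O ∩ Ḡ(ℓ)`, the valuation filtration of the subspace `O`. -/
noncomputable def Ffil (r : ℕ) (O : Submodule ℂ (Fin r → PowerSeries ℂ)) (ℓ : Fin r → ℕ) :
    Submodule ℂ (Fin r → PowerSeries ℂ) :=
  O ⊓ Gbar r ℓ

/-- `hfun O ℓ = dim_ℂ O / (O ∩ Ḡ(ℓ))`, the Hilbert function of the filtration. -/
noncomputable def hfun (r : ℕ) (O : Submodule ℂ (Fin r → PowerSeries ℂ)) (ℓ : Fin r → ℕ) : ℕ :=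
  Module.finrank ℂ (O ⧸ (Gbar r ℓ).comap O.subtype)

/-- `hbarfun O ℓ = dim_ℂ V / (Ḡ(ℓ) + O)`. -/
noncomputable def hbarfun (r : ℕ) (O : Submodule ℂ (Fin r → PowerSeries ℂ)) (ℓ : Fin r → ℕ) : ℕ :=
  Module.finrank ℂ ((Fin r → PowerSeries ℂ) ⧸ (Gbar r ℓ ⊔ O))

/-- `eN i` is the `i`-th standard basis vector of `ℕ^r`. -/
def eN {r : ℕ} (i : Fin r) : Fin r → ℕ := fun j => if j = i then 1 else 0


open Module

lemma gbar_antitone (r : ℕ) {ℓ m : Fin r → ℕ} (h : ℓ ≤ m) : Gbar r m ≤ Gbar r ℓ := by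
  intro f hf i
  exact le_trans (by exact_mod_cast Nat.cast_le.mpr (h i)) (hf i)

lemma fd_quot_gbar (r : ℕ) (ℓ : Fin r → ℕ) :
    FiniteDimensional ℂ ((Fin r → PowerSeries ℂ) ⧸ Gbar r ℓ) := by
  let Φ : (Fin r → PowerSeries ℂ) →ₗ[ℂ] (∀ i : Fin r, Fin (ℓ i) → ℂ) :=
    { toFun := fun f i k => PowerSeries.coeff (k : ℕ) (f i)
      map_add' := by intro a b; funext i k; simp
      map_smul' := by intro c a; funext i k; simp }
  have hker : Gbar r ℓ = LinearMap.ker Φ := by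
    ext f
    constructor
    · intro hf
      simp only [LinearMap.mem_ker]
      funext i k
      have : ((k : ℕ) : ℕ∞) < (f i).order :=
        lt_of_lt_of_le (by exact_mod_cast k.2) (hf i)
      exact PowerSeries.coeff_of_lt_order _ this
    · intro hf i
      refine PowerSeries.le_order _ _ ?_
      intro n hn
      have hn' : n < ℓ i := by exact_mod_cast hn
      exact congrFun (congrFun hf i) ⟨n, hn'⟩
  rw [hker]
  exact Module.Finite.equiv Φ.quotKerEquivRange.symm

lemma fd_hquot (r : ℕ) (O : Submodule ℂ (Fin r → PowerSeries ℂ)) (ℓ : Fin r → ℕ) :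
    FiniteDimensional ℂ (O ⧸ (Gbar r ℓ).comap O.subtype) := by
  haveI := fd_quot_gbar r ℓ
  let ψ : O →ₗ[ℂ] (Fin r → PowerSeries ℂ) ⧸ Gbar r ℓ := (Gbar r ℓ).mkQ ∘ₗ O.subtype
  have hker : (Gbar r ℓ).comap O.subtype = LinearMap.ker ψ := by
    ext x
    simp [ψ, Submodule.Quotient.mk_eq_zero]
  rw [hker]
  haveI : FiniteDimensional ℂ (LinearMap.range ψ) :=
    FiniteDimensional.finiteDimensional_submodule _
  exact Module.Finite.equiv ψ.quotKerEquivRange.symm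

lemma quot_rank_lt {M : Type*} [AddCommGroup M] [Module ℂ M] {K' K : Submodule ℂ M}
    (h : K' < K) [FiniteDimensional ℂ (M ⧸ K')] :
    finrank ℂ (M ⧸ K) < finrank ℂ (M ⧸ K') := by
  have hle : K' ≤ K := h.le
  set p : Submodule ℂ (M ⧸ K') := K.map K'.mkQ with hp
  have e : ((M ⧸ K') ⧸ p) ≃ₗ[ℂ] M ⧸ K := Submodule.quotientQuotientEquivQuotient K' K hle
  have hsum := p.finrank_quotient_add_finrank
  have hpos : 0 < finrank ℂ p := by
    obtain ⟨x, hxK, hxK'⟩ := SetLike.exists_of_lt h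
    have : Nontrivial p := by
      refine ⟨⟨⟨K'.mkQ x, Submodule.mem_map_of_mem hxK⟩, 0, ?_⟩⟩
      intro hc
      apply hxK'
      have : K'.mkQ x = 0 := congrArg Subtype.val hc
      rwa [Submodule.mkQ_apply, Submodule.Quotient.mk_eq_zero] at this
    exact finrank_pos
  have := e.finrank_eq
  omega

/-- assuming a conductor `c` with `Ḡ(c) ⊆ O`, for every `ℓ` and every index
`i`, `h(ℓ+E_i) > h(ℓ)` if and only if there is a semigroup element `s ≥ ℓ` with `s_i = ℓ_i`. -/
theorem statement11 (r : ℕ) (hr : 1 ≤ r) (O : Submodule ℂ (Fin r → PowerSeries ℂ))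
    (c : Fin r → ℕ) (hcond : Gbar r c ≤ O) :
    ∀ (ℓ : Fin r → ℕ) (i : Fin r),
      hfun r O ℓ < hfun r O (ℓ + eN i) ↔
        ∃ s : Fin r → ℕ, ℓ ≤ s ∧ s i = ℓ i ∧
          ∃ f ∈ O, ∀ j : Fin r, (f j).order = (s j : ℕ∞) := by
  intro ℓ i
  have hle : ℓ ≤ ℓ + eN i := fun j => Nat.le_add_right _ _
  have hKle : (Gbar r (ℓ + eN i)).comap O.subtype ≤ (Gbar r ℓ).comap O.subtype :=
    Submodule.comap_mono (gbar_antitone r hle)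
  haveI := fd_hquot r O (ℓ + eN i)
  constructor
  · intro hlt
    -- extract an element of F(ℓ) \ F(ℓ + E i)
    have hne : (Gbar r (ℓ + eN i)).comap O.subtype ≠ (Gbar r ℓ).comap O.subtype := by
      intro he
      have : hfun r O ℓ = hfun r O (ℓ + eN i) := by unfold hfun; rw [he]
      omega
    obtain ⟨x, hxK, hxK'⟩ := SetLike.exists_of_lt (lt_of_le_of_ne hKle hne)
    have hfO : (x : Fin r → PowerSeries ℂ) ∈ O := x.2
    have hfl : ∀ j, (ℓ j : ℕ∞) ≤ ((x : Fin r → PowerSeries ℂ) j).order := hxK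
    set f : Fin r → PowerSeries ℂ := (x : Fin r → PowerSeries ℂ) with hf
    -- the order at i must be exactly ℓ i
    have hi : (f i).order = (ℓ i : ℕ∞) := by
      by_contra hne2
      apply hxK'
      intro j
      show (((ℓ j + eN i j : ℕ) : ℕ∞)) ≤ (f j).order
      by_cases hj : j = i
      · subst hj
        have h1 : (ℓ j : ℕ∞) < (f j).order := lt_of_le_of_ne (hfl j) (fun h => hne2 h.symm)
        have : (ℓ j : ℕ∞) + 1 ≤ (f j).order :=
          (ENat.add_one_le_iff (by exact_mod_cast ENat.coe_ne_top (ℓ j))).mpr h1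
        simpa [eN] using this
      · simpa [eN, hj] using hfl j
    -- build the correction g
    set N : Fin r → ℕ := fun j => max (c j) (max (ℓ j) ((f j).order.toNat)) + 1 with hN
    set g : Fin r → PowerSeries ℂ := fun j => PowerSeries.X ^ N j with hg
    have hgord : ∀ j, (g j).order = (N j : ℕ∞) := fun j => PowerSeries.order_X_pow (N j)
    have hgO : g ∈ O := by
      apply hcond
      intro j
      rw [hgord j]
      exact_mod_cast Nat.le_of_lt (Nat.lt_succ_of_le (le_max_left _ _))
    -- the resulting orders
    set s : Fin r → ℕ := fun j => if (f j).order = ⊤ then N j else (f j).order.toNat with hs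
    have horder : ∀ j, ((f + g) j).order = (s j : ℕ∞) := by
      intro j
      by_cases hj : (f j).order = ⊤
      · have hf0 : f j = 0 := PowerSeries.order_eq_top.mp hj
        simp [hs, hj, Pi.add_apply, hf0, hgord j]
      · obtain ⟨n, hn⟩ := WithTop.ne_top_iff_exists.mp hj
        have hnval : (f j).order.toNat = n := by rw [← hn]; exact ENat.toNat_coe n
        have hlt2 : n < N j := by
          simp only [hN, hnval]
          omega
        have hneq : (f j).order ≠ (g j).order := by
          rw [hgord j, ← hn]
          exact_mod_cast fun h => absurd (Nat.cast_injective h) (Nat.ne_of_lt hlt2)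
        have := PowerSeries.order_add_of_order_ne (f j) (g j) hneq
        rw [Pi.add_apply, this, hgord j, ← hn]
        simp only [hs, hj, if_false, hnval]
        exact min_eq_left (ENat.coe_le_coe.mpr (Nat.le_of_lt hlt2))
    refine ⟨s, ?_, ?_, f + g, O.add_mem hfO hgO, horder⟩
    · intro j
      by_cases hj : (f j).order = ⊤
      · simp only [hs, hj, if_true, hN]
        have : ℓ j ≤ max (c j) (max (ℓ j) ((f j).order.toNat)) :=
          le_trans (le_max_left _ _) (le_max_right _ _)
        omega
      · simp only [hs, hj, if_false]
        have := hfl j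
        obtain ⟨n, hn⟩ := WithTop.ne_top_iff_exists.mp hj
        rw [← hn] at this
        have : ℓ j ≤ n := ENat.coe_le_coe.mp this
        rw [← hn]; exact le_of_le_of_eq this (ENat.toNat_coe n).symm
    · have : (f i).order ≠ ⊤ := by rw [hi]; exact ENat.coe_ne_top _
      simp only [hs, this, if_false, hi]
      simp
  · rintro ⟨s, hsle, hsi, f, hfO, hford⟩
    have hfK : (⟨f, hfO⟩ : O) ∈ (Gbar r ℓ).comap O.subtype := by
      intro j
      rw [Submodule.subtype_apply, hford j]
      exact_mod_cast hsle j
    have hfK' : (⟨f, hfO⟩ : O) ∉ (Gbar r (ℓ + eN i)).comap O.subtype := by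
      intro hmem
      have := hmem i
      rw [Submodule.subtype_apply, hford i, hsi] at this
      have h2 : ((ℓ i + eN i i : ℕ) : ℕ∞) ≤ ((ℓ i : ℕ)) := this
      have : ℓ i + 1 ≤ ℓ i := by
        have := (Nat.cast_le (α := ℕ∞)).mp h2
        simpa [eN] using this
      omega
    have hKlt : (Gbar r (ℓ + eN i)).comap O.subtype < (Gbar r ℓ).comap O.subtype :=
      lt_of_le_of_ne hKle (fun h => hfK' (h ▸ hfK))
    exact quot_rank_lt hKlt
end

section
/- If ℓ_1, ℓ_2 ∈ ℕ^r satisfy F(ℓ_2) ⊆ F(ℓ_1), then there exist an integer n ≥ 0 and lattice points m_0, m_1, …, m_n ∈ ℕ^r such that F(m_0) = F(ℓ_1), F(m_n) = F(ℓ_2), and for each 0 ≤ k < n one has F(m_{k+1}) ⊆ F(m_k) with dim_ℂ F(m_k)/F(m_{k+1}) = 1. In other words, any inclusion between members of the family {F(ℓ)} can be filled by a chain of members with codimension-one steps. -/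
lemma Gbar_antitone {r : ℕ} {a b : Fin r → ℕ} (h : a ≤ b) : Gbar r b ≤ Gbar r a := by
  intro f hf i
  exact le_trans (by exact_mod_cast Nat.cast_le.mpr (h i)) (hf i)

lemma Ffil_antitone {r : ℕ} (O : Submodule ℂ (Fin r → PowerSeries ℂ)) {a b : Fin r → ℕ}
    (h : a ≤ b) : Ffil r O b ≤ Ffil r O a :=
  inf_le_inf_left _ (Gbar_antitone h)

lemma mem_Gbar_add_eN {r : ℕ} {a : Fin r → ℕ} {i : Fin r} {f : Fin r → PowerSeries ℂ}
    (hf : f ∈ Gbar r a) :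
    f ∈ Gbar r (a + eN i) ↔ PowerSeries.coeff (a i) (f i) = 0 := by
  constructor
  · intro h
    refine PowerSeries.coeff_of_lt_order _ (lt_of_lt_of_le ?_ (h i))
    have : (a + eN i) i = a i + 1 := by simp [eN]
    rw [this]
    exact_mod_cast Nat.cast_lt.mpr (Nat.lt_succ_self _)
  · intro h j
    by_cases hj : j = i
    · subst hj
      have : (a + eN j) j = a j + 1 := by simp [eN]
      rw [this]
      refine PowerSeries.le_order _ _ ?_
      intro n hn
      have hn' : n ≤ a j := by exact_mod_cast Nat.lt_succ_iff.mp (by exact_mod_cast hn)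
      rcases lt_or_eq_of_le hn' with hlt | heq
      · exact PowerSeries.coeff_of_lt_order _ (lt_of_lt_of_le (by exact_mod_cast hlt) (hf j))
      · rwa [heq]
    · have : (a + eN i) j = a j := by simp [eN, hj]
      rw [this]
      exact hf j

/-- The coefficient functional on `Ffil r O a`. -/
noncomputable def coeffMap {r : ℕ} (O : Submodule ℂ (Fin r → PowerSeries ℂ)) (a : Fin r → ℕ)
    (i : Fin r) : (Ffil r O a) →ₗ[ℂ] ℂ :=
  (PowerSeries.coeff (a i)).comp ((LinearMap.proj i).comp (Ffil r O a).subtype)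

lemma ker_coeffMap {r : ℕ} (O : Submodule ℂ (Fin r → PowerSeries ℂ)) (a : Fin r → ℕ)
    (i : Fin r) :
    LinearMap.ker (coeffMap O a i) = (Ffil r O (a + eN i)).comap (Ffil r O a).subtype := by
  ext ⟨f, hf⟩
  simp only [LinearMap.mem_ker, Submodule.mem_comap, coeffMap, LinearMap.comp_apply,
    Submodule.subtype_apply, LinearMap.proj_apply]
  constructor
  · intro h
    exact ⟨hf.1, (mem_Gbar_add_eN hf.2).mpr h⟩
  · intro h
    exact (mem_Gbar_add_eN hf.2).mp h.2

lemma step_codim_le {r : ℕ} (O : Submodule ℂ (Fin r → PowerSeries ℂ)) (a : Fin r → ℕ)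
    (i : Fin r) :
    Module.finrank ℂ
      (Ffil r O a ⧸ (Ffil r O (a + eN i)).comap (Ffil r O a).subtype) ≤ 1 := by
  haveI : FiniteDimensional ℂ (LinearMap.range (coeffMap O a i)) :=
    FiniteDimensional.finiteDimensional_submodule _
  rw [← ker_coeffMap O a i]
  have e := (coeffMap O a i).quotKerEquivRange
  rw [LinearEquiv.finrank_eq e]
  calc Module.finrank ℂ (LinearMap.range (coeffMap O a i)) ≤ Module.finrank ℂ ℂ :=
        Submodule.finrank_le _
    _ = 1 := Module.finrank_self ℂ

lemma step_fd {r : ℕ} (O : Submodule ℂ (Fin r → PowerSeries ℂ)) (a : Fin r → ℕ) (i : Fin r) :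
    FiniteDimensional ℂ
      (Ffil r O a ⧸ (Ffil r O (a + eN i)).comap (Ffil r O a).subtype) := by
  haveI : FiniteDimensional ℂ (LinearMap.range (coeffMap O a i)) :=
    FiniteDimensional.finiteDimensional_submodule _
  rw [← ker_coeffMap O a i]
  exact Module.Finite.equiv (coeffMap O a i).quotKerEquivRange.symm

lemma step_codim_eq {r : ℕ} (O : Submodule ℂ (Fin r → PowerSeries ℂ)) (a : Fin r → ℕ)
    (i : Fin r) (hne : ¬ Ffil r O a ≤ Ffil r O (a + eN i)) :
    Module.finrank ℂ
      (Ffil r O a ⧸ (Ffil r O (a + eN i)).comap (Ffil r O a).subtype) = 1 := by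
  have hfd := step_fd O a i
  refine le_antisymm (step_codim_le O a i) ?_
  have hne' : (Ffil r O (a + eN i)).comap (Ffil r O a).subtype ≠ ⊤ := by
    intro h
    apply hne
    intro x hx
    have := h ▸ Submodule.mem_top (x := (⟨x, hx⟩ : Ffil r O a))
    exact this
  have : Nontrivial (Ffil r O a ⧸ (Ffil r O (a + eN i)).comap (Ffil r O a).subtype) := by
    rw [← not_subsingleton_iff_nontrivial, Submodule.Quotient.subsingleton_iff]
    exact hne'
  exact Module.finrank_pos

lemma chain_exists {r : ℕ} (O : Submodule ℂ (Fin r → PowerSeries ℂ)) :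
    ∀ (N : ℕ) (a b : Fin r → ℕ), (∑ i, (b i - a i)) = N → a ≤ b →
    ∃ (n : ℕ) (m : ℕ → (Fin r → ℕ)),
      Ffil r O (m 0) = Ffil r O a ∧
      Ffil r O (m n) = Ffil r O b ∧
      ∀ k < n, Ffil r O (m (k + 1)) ≤ Ffil r O (m k) ∧
        Module.finrank ℂ
          (Ffil r O (m k) ⧸ (Ffil r O (m (k + 1))).comap (Ffil r O (m k)).subtype) = 1 := by
  intro N
  induction N with
  | zero =>
    intro a b hsum hab
    have hab' : a = b := by
      funext i
      have h1 : b i - a i = 0 := Finset.sum_eq_zero_iff.mp hsum i (Finset.mem_univ i)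
      have h2 : a i ≤ b i := hab i
      omega
    subst hab'
    exact ⟨0, fun _ => a, rfl, rfl, fun k hk => absurd hk (Nat.not_lt_zero k)⟩
  | succ N ih =>
    intro a b hsum hab
    have hex : ∃ i, a i < b i := by
      by_contra h
      push_neg at h
      have : ∀ i, b i - a i = 0 := fun i => by have := h i; omega
      simp [this] at hsum
    obtain ⟨i, hi⟩ := hex
    set a' := a + eN i with ha'
    have ha'i : a' i = a i + 1 := by simp [ha', eN]
    have ha'j : ∀ j, j ≠ i → a' j = a j := by intro j hj; simp [ha', eN, hj]
    clear_value a'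
    have ha'b : a' ≤ b := by
      intro j
      by_cases hj : j = i
      · subst hj; rw [ha'i]; exact hi
      · rw [ha'j j hj]; exact hab j
    have haa' : a ≤ a' := by
      intro j
      by_cases hj : j = i
      · subst hj; rw [ha'i]; exact Nat.le_succ _
      · rw [ha'j j hj]
    have hsum' : (∑ j, (b j - a' j)) = N := by
      have h1 : (∑ j, (b j - a j)) =
          (b i - a i) + ∑ j ∈ Finset.univ.erase i, (b j - a j) :=
        (Finset.add_sum_erase _ _ (Finset.mem_univ i)).symm
      have h2 : (∑ j, (b j - a' j)) =
          (b i - a' i) + ∑ j ∈ Finset.univ.erase i, (b j - a' j) :=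
        (Finset.add_sum_erase _ _ (Finset.mem_univ i)).symm
      have h3 : (∑ j ∈ Finset.univ.erase i, (b j - a' j)) =
          ∑ j ∈ Finset.univ.erase i, (b j - a j) := by
        refine Finset.sum_congr rfl fun j hj => ?_
        rw [ha'j j (Finset.ne_of_mem_erase hj)]
      rw [h2, h3, ha'i]
      rw [h1] at hsum
      omega
    subst ha'
    obtain ⟨n, m, hm0, hmn, hstep⟩ := ih (a + eN i) b hsum' ha'b
    by_cases hcase : Ffil r O a ≤ Ffil r O (a + eN i)
    · have heq : Ffil r O (a + eN i) = Ffil r O a := le_antisymm (Ffil_antitone O haa') hcase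
      exact ⟨n, m, hm0.trans heq, hmn, hstep⟩
    · refine ⟨n + 1, fun k => if k = 0 then a else m (k - 1), rfl, hmn, ?_⟩
      intro k hk
      rcases k with _ | k'
      · have h : Ffil r O (m 0) ≤ Ffil r O a ∧
            Module.finrank ℂ
              (Ffil r O a ⧸ (Ffil r O (m 0)).comap (Ffil r O a).subtype) = 1 := by
          rw [hm0]
          exact ⟨Ffil_antitone O haa', step_codim_eq O a i hcase⟩
        exact h
      · exact hstep k' (by omega)

/-- any inclusion `F(ℓ₂) ⊆ F(ℓ₁)` between members of the family `{F(ℓ)}` can be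
filled by a chain of members with codimension-one steps. -/
theorem statement13 (r : ℕ) (hr : 1 ≤ r) (O : Submodule ℂ (Fin r → PowerSeries ℂ))
    (ℓ₁ ℓ₂ : Fin r → ℕ) (hle : Ffil r O ℓ₂ ≤ Ffil r O ℓ₁) :
    ∃ (n : ℕ) (m : ℕ → (Fin r → ℕ)),
      Ffil r O (m 0) = Ffil r O ℓ₁ ∧
      Ffil r O (m n) = Ffil r O ℓ₂ ∧
      ∀ k < n, Ffil r O (m (k + 1)) ≤ Ffil r O (m k) ∧
        Module.finrank ℂ
          (Ffil r O (m k) ⧸ (Ffil r O (m (k + 1))).comap (Ffil r O (m k)).subtype) = 1 := by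
  set b : Fin r → ℕ := fun i => max (ℓ₁ i) (ℓ₂ i) with hb
  have h1b : ℓ₁ ≤ b := fun i => le_max_left _ _
  have h2b : ℓ₂ ≤ b := fun i => le_max_right _ _
  have hbF : Ffil r O b = Ffil r O ℓ₂ := by
    refine le_antisymm (Ffil_antitone O h2b) ?_
    intro f hf
    have hf1 : f ∈ Ffil r O ℓ₁ := hle hf
    exact ⟨hf.1, fun i => max_le (hf1.2 i) (hf.2 i)⟩
  obtain ⟨n, m, hm0, hmn, hstep⟩ := chain_exists O (∑ i, (b i - ℓ₁ i)) ℓ₁ b rfl h1b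
  exact ⟨n, m, hm0, hmn.trans hbF, hstep⟩
end

section
/- Define w(ℓ) = 2·h(ℓ) − |ℓ| for ℓ ∈ ℕ^r. Then for every ℓ ∈ ℕ^r and every subset I ⊆ {1,…,r}, the maximal weight over the vertices of the cube (ℓ,I) equals w(ℓ) plus the codimension of F(ℓ+E_I) in F(ℓ): max{w(ℓ+E_J) : J ⊆ I} = w(ℓ) + (h(ℓ+E_I) − h(ℓ)). -/
/-- `eNI I` is the lattice vector `E_I = ∑_{i ∈ I} E_i` in `ℕ^r`. -/
def eNI {r : ℕ} (I : Finset (Fin r)) : Fin r → ℕ := fun v => if v ∈ I then 1 else 0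

-- truncation map
noncomputable def truncMap (r : ℕ) (ℓ : Fin r → ℕ) :
    (Fin r → PowerSeries ℂ) →ₗ[ℂ] (Π i : Fin r, Fin (ℓ i) → ℂ) where
  toFun f := fun i k => PowerSeries.coeff k (f i)
  map_add' := by intros; funext; simp
  map_smul' := by intros; funext; simp

lemma gbar_eq_ker (r : ℕ) (ℓ : Fin r → ℕ) :
    Gbar r ℓ = LinearMap.ker (truncMap r ℓ) := by
  ext f
  constructor
  · intro hf
    simp only [LinearMap.mem_ker]
    funext i k
    exact PowerSeries.coeff_of_lt_order _ (lt_of_lt_of_le (by exact_mod_cast k.2) (hf i))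
  · intro hf i
    refine PowerSeries.le_order _ _ ?_
    intro n hn
    have hn' : n < ℓ i := by exact_mod_cast hn
    exact congrFun (congrFun hf i) ⟨n, hn'⟩

instance quotGbar_findim (r : ℕ) (ℓ : Fin r → ℕ) :
    FiniteDimensional ℂ ((Fin r → PowerSeries ℂ) ⧸ (Gbar r ℓ)) := by
  rw [gbar_eq_ker]
  exact Module.Finite.of_injective _ (LinearMap.quotKerEquivRange (truncMap r ℓ)).injective

lemma comap_eq_ker (r : ℕ) (O : Submodule ℂ (Fin r → PowerSeries ℂ)) (ℓ : Fin r → ℕ) :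
    (Gbar r ℓ).comap O.subtype = LinearMap.ker ((Gbar r ℓ).mkQ.comp O.subtype) := by
  rw [LinearMap.ker_comp, Submodule.ker_mkQ]

set_option synthInstance.maxHeartbeats 1000000 in
instance quotP_findim (r : ℕ) (O : Submodule ℂ (Fin r → PowerSeries ℂ)) (ℓ : Fin r → ℕ) :
    FiniteDimensional ℂ (O ⧸ (Gbar r ℓ).comap O.subtype) := by
  rw [comap_eq_ker]
  exact Module.Finite.of_injective _
    (LinearMap.quotKerEquivRange ((Gbar r ℓ).mkQ.comp O.subtype)).injective

theorem tst (r : ℕ) : True := trivial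

lemma mem_gbar {r : ℕ} {ℓ : Fin r → ℕ} {f : Fin r → PowerSeries ℂ} :
    f ∈ Gbar r ℓ ↔ ∀ i, (ℓ i : ℕ∞) ≤ (f i).order := Iff.rfl

lemma gbar_anti (r : ℕ) {ℓ ℓ' : Fin r → ℕ} (h : ∀ i, ℓ i ≤ ℓ' i) :
    Gbar r ℓ' ≤ Gbar r ℓ := fun f hf i =>
  le_trans (by exact_mod_cast h i) (hf i)

lemma quot_surj {X : Type*} [AddCommGroup X] [Module ℂ X]
    {N M : Submodule ℂ X} (hNM : N ≤ M) :
    Function.Surjective (Submodule.mapQ N M LinearMap.id (by simpa using hNM)) := by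
  intro x
  obtain ⟨y, rfl⟩ := M.mkQ_surjective x
  exact ⟨N.mkQ y, by simp [Submodule.mapQ_apply]⟩

lemma quot_findim_mono {X : Type*} [AddCommGroup X] [Module ℂ X]
    {N M : Submodule ℂ X} (hNM : N ≤ M) [FiniteDimensional ℂ (X ⧸ N)] :
    Module.finrank ℂ (X ⧸ M) ≤ Module.finrank ℂ (X ⧸ N) := by
  have := LinearMap.finrank_range_le (Submodule.mapQ N M LinearMap.id (by simpa using hNM))
  rwa [LinearMap.range_eq_top.mpr (quot_surj hNM), finrank_top] at this

lemma le_of_quot_finrank_eq {X : Type*} [AddCommGroup X] [Module ℂ X]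
    {N M : Submodule ℂ X} (hNM : N ≤ M) [FiniteDimensional ℂ (X ⧸ N)]
    (h : Module.finrank ℂ (X ⧸ M) = Module.finrank ℂ (X ⧸ N)) : M ≤ N := by
  set q := Submodule.mapQ N M LinearMap.id (by simpa using hNM) with hq
  have h1 := LinearMap.finrank_range_add_finrank_ker q
  rw [LinearMap.range_eq_top.mpr (quot_surj hNM), finrank_top, h] at h1
  have h2 : Module.finrank ℂ (LinearMap.ker q) = 0 := by omega
  have hker : LinearMap.ker q = ⊥ := Submodule.finrank_eq_zero.mp h2
  intro x hx
  have hqx : q (N.mkQ x) = 0 := by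
    rw [hq, Submodule.mkQ_apply, Submodule.mapQ_apply, LinearMap.id_apply]
    exact (Submodule.Quotient.mk_eq_zero M).mpr hx
  have : N.mkQ x ∈ LinearMap.ker q := hqx
  rw [hker, Submodule.mem_bot] at this
  simpa [Submodule.Quotient.mk_eq_zero] using this

lemma hfun_mono (r : ℕ) (O : Submodule ℂ (Fin r → PowerSeries ℂ)) {ℓ ℓ' : Fin r → ℕ}
    (h : ∀ i, ℓ i ≤ ℓ' i) : hfun r O ℓ ≤ hfun r O ℓ' :=
  quot_findim_mono (Submodule.comap_mono (gbar_anti r h))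

noncomputable def lamMap (r : ℕ) (O : Submodule ℂ (Fin r → PowerSeries ℂ)) (n : ℕ) (i : Fin r) :
    O →ₗ[ℂ] ℂ :=
  (PowerSeries.coeff n) ∘ₗ ((LinearMap.proj i) ∘ₗ O.subtype)

lemma ker_prod_eq (r : ℕ) (O : Submodule ℂ (Fin r → PowerSeries ℂ)) (ℓ : Fin r → ℕ) (i : Fin r) :
    LinearMap.ker ((((Gbar r ℓ).comap O.subtype).mkQ).prod (lamMap r O (ℓ i) i))
      = (Gbar r (ℓ + eN i)).comap O.subtype := by
  rw [LinearMap.ker_prod, Submodule.ker_mkQ]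
  ext f
  simp only [Submodule.mem_inf, Submodule.mem_comap, LinearMap.mem_ker, mem_gbar,
    Submodule.coe_subtype, lamMap, LinearMap.comp_apply, LinearMap.proj_apply]
  constructor
  · rintro ⟨hf, hc⟩ j
    by_cases hj : j = i
    · subst hj
      have he : ((ℓ + eN j) j : ℕ∞) = (((ℓ j) + 1 : ℕ) : ℕ∞) := by
        norm_cast
        simp [eN]
      rw [he]
      refine PowerSeries.le_order _ _ ?_
      intro n hn
      have hn' : n < ℓ j + 1 := by exact_mod_cast hn
      rcases Nat.lt_succ_iff_lt_or_eq.mp hn' with h | h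
      · exact PowerSeries.coeff_of_lt_order _ (lt_of_lt_of_le (by exact_mod_cast h) (hf j))
      · subst h; exact hc
    · have he : ((ℓ + eN i) j : ℕ∞) = (ℓ j : ℕ∞) := by
        norm_cast
        simp [eN, hj]
      rw [he]; exact hf j
  · intro hf
    refine ⟨fun j => le_trans ?_ (hf j), ?_⟩
    · exact_mod_cast Nat.le_add_right _ _
    · apply PowerSeries.coeff_of_lt_order
      refine lt_of_lt_of_le ?_ (hf i)
      have he : ((ℓ + eN i) i : ℕ∞) = (((ℓ i) + 1 : ℕ) : ℕ∞) := by
        norm_cast; simp [eN]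
      rw [he]
      exact_mod_cast Nat.lt_succ_self _

lemma hfun_step_le (r : ℕ) (O : Submodule ℂ (Fin r → PowerSeries ℂ)) (ℓ : Fin r → ℕ)
    (i : Fin r) : hfun r O (ℓ + eN i) ≤ hfun r O ℓ + 1 := by
  set Φ := (((Gbar r ℓ).comap O.subtype).mkQ).prod (lamMap r O (ℓ i) i) with hΦ
  have h1 : hfun r O (ℓ + eN i) = Module.finrank ℂ (LinearMap.range Φ) := by
    unfold hfun
    rw [← ker_prod_eq r O ℓ i]
    exact LinearEquiv.finrank_eq (LinearMap.quotKerEquivRange Φ)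
  rw [h1]
  have h2 := Submodule.finrank_le (LinearMap.range Φ)
  rwa [Module.finrank_prod, Module.finrank_self] at h2

lemma pfil_eq_of_step (r : ℕ) (O : Submodule ℂ (Fin r → PowerSeries ℂ)) (ℓ : Fin r → ℕ)
    (i : Fin r) (h : hfun r O (ℓ + eN i) = hfun r O ℓ)
    {ℓ' : Fin r → ℕ} (hle : ∀ j, ℓ j ≤ ℓ' j) (hi : ℓ' i = ℓ i) :
    (Gbar r (ℓ' + eN i)).comap O.subtype = (Gbar r ℓ').comap O.subtype := by
  apply le_antisymm
  · exact Submodule.comap_mono (gbar_anti r (fun j => Nat.le_add_right _ _))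
  · intro f hf
    have hN : (Gbar r ℓ).comap O.subtype ≤ (Gbar r (ℓ + eN i)).comap O.subtype :=
      le_of_quot_finrank_eq (Submodule.comap_mono (gbar_anti r (fun j => Nat.le_add_right _ _))) h.symm
    have hfl : (f : Fin r → PowerSeries ℂ) ∈ Gbar r ℓ := gbar_anti r hle hf
    have hfi : (f : Fin r → PowerSeries ℂ) ∈ Gbar r (ℓ + eN i) := hN hfl
    intro j
    by_cases hj : j = i
    · subst hj
      have he : ((ℓ' + eN j) j : ℕ∞) = ((ℓ + eN j) j : ℕ∞) := by
        norm_cast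
        simp [eN, hi]
      rw [he]
      exact hfi j
    · have he : ((ℓ' + eN i) j : ℕ∞) = (ℓ' j : ℕ∞) := by
        norm_cast
        simp [eN, hj]
      rw [he]
      exact hf j

lemma hfun_eq_of_step (r : ℕ) (O : Submodule ℂ (Fin r → PowerSeries ℂ)) (ℓ : Fin r → ℕ)
    (i : Fin r) (h : hfun r O (ℓ + eN i) = hfun r O ℓ)
    {ℓ' : Fin r → ℕ} (hle : ∀ j, ℓ j ≤ ℓ' j) (hi : ℓ' i = ℓ i) :
    hfun r O (ℓ' + eN i) = hfun r O ℓ' := by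
  unfold hfun
  rw [pfil_eq_of_step r O ℓ i h hle hi]

lemma eNI_empty {r : ℕ} (ℓ : Fin r → ℕ) : ℓ + eNI (∅ : Finset (Fin r)) = ℓ := by
  funext j; simp [eNI]

lemma eNI_insert {r : ℕ} (ℓ : Fin r → ℕ) {i : Fin r} {I : Finset (Fin r)} (hiI : i ∉ I) :
    ℓ + eNI (insert i I) = (ℓ + eN i) + eNI I := by
  funext j
  simp only [Pi.add_apply, eNI, eN, Finset.mem_insert]
  by_cases hj : j = i
  · subst hj; simp [hiI]
  · simp [hj]

lemma eNI_insert' {r : ℕ} (ℓ : Fin r → ℕ) {i : Fin r} {I : Finset (Fin r)} (hiI : i ∉ I) :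
    ℓ + eNI (insert i I) = (ℓ + eNI I) + eN i := by
  rw [eNI_insert ℓ hiI]
  funext j
  simp only [Pi.add_apply]
  omega

lemma hfun_add_card (r : ℕ) (O : Submodule ℂ (Fin r → PowerSeries ℂ)) (I : Finset (Fin r)) :
    ∀ ℓ : Fin r → ℕ, hfun r O (ℓ + eNI I) ≤ hfun r O ℓ + I.card := by
  induction I using Finset.induction_on with
  | empty => intro ℓ; simp [eNI_empty]
  | @insert i I hiI ih =>
    intro ℓ
    rw [eNI_insert ℓ hiI, Finset.card_insert_of_notMem hiI]
    calc hfun r O ((ℓ + eN i) + eNI I) ≤ hfun r O (ℓ + eN i) + I.card := ih _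
      _ ≤ hfun r O ℓ + 1 + I.card := by
          have := hfun_step_le r O ℓ i; omega
      _ = hfun r O ℓ + (I.card + 1) := by omega

lemma exists_basis (r : ℕ) (O : Submodule ℂ (Fin r → PowerSeries ℂ)) (I : Finset (Fin r)) :
    ∀ ℓ : Fin r → ℕ, ∃ J ⊆ I,
      hfun r O (ℓ + eNI J) = hfun r O (ℓ + eNI I) ∧
      hfun r O (ℓ + eNI J) = hfun r O ℓ + J.card := by
  induction I using Finset.induction_on with
  | empty =>
    intro ℓ
    exact ⟨∅, Finset.Subset.refl _, rfl, by simp [eNI_empty]⟩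
  | @insert i I hiI ih =>
    intro ℓ
    by_cases hstep : hfun r O (ℓ + eN i) = hfun r O ℓ
    · obtain ⟨J, hJI, e1, e2⟩ := ih ℓ
      refine ⟨J, hJI.trans (Finset.subset_insert i I), ?_, e2⟩
      rw [e1, eNI_insert' ℓ hiI]
      exact (hfun_eq_of_step r O ℓ i hstep (ℓ' := ℓ + eNI I)
        (fun j => Nat.le_add_right _ _) (by simp [eNI, hiI])).symm
    · have h1 : hfun r O ℓ ≤ hfun r O (ℓ + eN i) :=
        hfun_mono r O (fun j => Nat.le_add_right _ _)
      have h2 := hfun_step_le r O ℓ i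
      have hstep' : hfun r O (ℓ + eN i) = hfun r O ℓ + 1 := by omega
      obtain ⟨J, hJI, e1, e2⟩ := ih (ℓ + eN i)
      have hiJ : i ∉ J := fun h => hiI (hJI h)
      refine ⟨insert i J, Finset.insert_subset_insert i hJI, ?_, ?_⟩
      · rw [eNI_insert ℓ hiJ, eNI_insert ℓ hiI]
        exact e1
      · rw [eNI_insert ℓ hiJ, e2, hstep', Finset.card_insert_of_notMem hiJ]
        omega

lemma sum_eNI {r : ℕ} (ℓ : Fin r → ℕ) (J : Finset (Fin r)) :
    ∑ j, ((ℓ + eNI J) j : ℤ) = ∑ j, (ℓ j : ℤ) + J.card := by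
  simp only [Pi.add_apply]
  push_cast
  rw [Finset.sum_add_distrib]
  congr 1
  have : ∀ j : Fin r, ((eNI J j : ℕ) : ℤ) = if j ∈ J then 1 else 0 := by
    intro j; simp [eNI, apply_ite]
  simp [this, Finset.sum_ite_mem, Finset.univ_inter, Finset.sum_const]

/-- The weight function `w(ℓ) = 2h(ℓ) − |ℓ|`. -/
noncomputable def wfun (r : ℕ) (O : Submodule ℂ (Fin r → PowerSeries ℂ)) (ℓ : Fin r → ℕ) : ℤ :=
  2 * (hfun r O ℓ : ℤ) - ∑ i, (ℓ i : ℤ)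

/-- the maximal weight over the vertices of the cube `(ℓ, I)` equals
`w(ℓ)` plus the codimension of `F(ℓ+E_I)` in `F(ℓ)`, i.e.
`max{w(ℓ+E_J) : J ⊆ I} = w(ℓ) + (h(ℓ+E_I) − h(ℓ))`. -/
theorem statement14 (r : ℕ) (hr : 1 ≤ r) (O : Submodule ℂ (Fin r → PowerSeries ℂ))
    (ℓ : Fin r → ℕ) (I : Finset (Fin r)) :
    I.powerset.sup' (Finset.powerset_nonempty I) (fun J => wfun r O (ℓ + eNI J))
      = wfun r O ℓ + ((hfun r O (ℓ + eNI I) : ℤ) - (hfun r O ℓ : ℤ)) := by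
  apply le_antisymm
  · apply Finset.sup'_le
    intro J hJ
    have hJI : J ⊆ I := Finset.mem_powerset.mp hJ
    have h1 : hfun r O (ℓ + eNI J) ≤ hfun r O ℓ + J.card := hfun_add_card r O J ℓ
    have h2 : hfun r O (ℓ + eNI J) ≤ hfun r O (ℓ + eNI I) := by
      apply hfun_mono
      intro j
      simp only [Pi.add_apply, eNI]
      by_cases hj : j ∈ J
      · simp [hj, hJI hj]
      · rw [if_neg hj]; split <;> omega
    unfold wfun
    rw [sum_eNI]
    omega
  · obtain ⟨J, hJI, e1, e2⟩ := exists_basis r O I ℓ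
    refine le_trans ?_ (Finset.le_sup' _ (Finset.mem_powerset.mpr hJI))
    unfold wfun
    rw [sum_eNI]
    omega
end
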